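/- For every λ ∈ ℂ with |Im(λ)| ≤ (n-1)/2 and every r ≥ 0, |ω_λ^{(n)}(a_r)| ≤ 1; moreover, if |Im(λ)| < (n-1)/2 and r > 0 then |ω_λ^{(n)}(a_r)| < 1. -/

import Mathlib

open intervalIntegral Real Complex

/-- The real Beta function `B(x,y) = Γ(x)Γ(y)/Γ(x+y)`. -/
noncomputable def realBeta (x y : ℝ) : ℝ :=
  Real.Gamma x * Real.Gamma y / Real.Gamma (x + y)

/-- The normalizing constant `a_n = 2^{(n-1)/2}/B((n-1)/2, 1/2)`. -/
noncomputable def aconst (n : ℕ) : ℝ :=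
  (2:ℝ) ^ (((n:ℝ) - 1) / 2) / realBeta (((n:ℝ) - 1) / 2) (1/2)

/-- The spherical function `ω_λ^{(n)}(a_r)` for complex parameter `λ`, with the
limiting value `1` at `r = 0`. -/
noncomputable def sphFnC (n : ℕ) (lam : ℂ) (r : ℝ) : ℂ :=
  if r = 0 then 1 else
    (aconst n * Real.sinh r ^ ((2:ℝ) - n) : ℝ) *
      ∫ s in (0:ℝ)..r,
        ((Real.cosh r - Real.cosh s) ^ (((n:ℝ) - 3) / 2) : ℝ) * Complex.cos (lam * s)

open MeasureTheory Set

lemma betaReal_integrable {a b : ℝ} (ha : 0 < a) (hb : 0 < b) :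
    IntervalIntegrable (fun x : ℝ => x ^ (a - 1) * (1 - x) ^ (b - 1)) volume 0 1 := by
  have hc := Complex.betaIntegral_convergent (u := (a : ℂ)) (v := (b : ℂ))
    (by simpa using ha) (by simpa using hb)
  have := hc.norm
  rw [intervalIntegrable_iff] at this ⊢
  refine this.congr_fun ?_ measurableSet_uIoc
  intro x hx
  rw [uIoc_of_le (by norm_num : (0:ℝ) ≤ 1)] at hx
  have hx0 : 0 ≤ x := hx.1.le
  have hx1 : 0 ≤ 1 - x := by linarith [hx.2]
  simp only [norm_mul]
  rw [show ((a:ℂ) - 1) = ((a - 1 : ℝ) : ℂ) by push_cast; ring,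
      show ((b:ℂ) - 1) = ((b - 1 : ℝ) : ℂ) by push_cast; ring,
      show (1 - (x:ℂ)) = ((1 - x : ℝ) : ℂ) by push_cast; ring,
      ← Complex.ofReal_cpow hx0, ← Complex.ofReal_cpow hx1]
  simp [_root_.abs_of_nonneg (Real.rpow_nonneg hx0 _), _root_.abs_of_nonneg (Real.rpow_nonneg hx1 _)]

lemma betaReal_integral {a b : ℝ} (ha : 0 < a) (hb : 0 < b) :
    ∫ x in (0:ℝ)..1, x ^ (a - 1) * (1 - x) ^ (b - 1) = realBeta a b := by
  have key := Complex.Gamma_mul_Gamma_eq_betaIntegral (s := (a:ℂ)) (t := (b:ℂ))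
    (by simpa using ha) (by simpa using hb)
  have hI : Complex.betaIntegral (a:ℂ) (b:ℂ)
      = ((∫ x in (0:ℝ)..1, x ^ (a - 1) * (1 - x) ^ (b - 1) : ℝ) : ℂ) := by
    rw [Complex.betaIntegral, ← intervalIntegral.integral_ofReal]
    refine intervalIntegral.integral_congr ?_
    intro x hx
    rw [uIcc_of_le (by norm_num : (0:ℝ) ≤ 1)] at hx
    have hx0 : 0 ≤ x := hx.1
    have hx1 : 0 ≤ 1 - x := by linarith [hx.2]
    dsimp only
    rw [show ((a:ℂ) - 1) = ((a - 1 : ℝ) : ℂ) by push_cast; ring,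
        show ((b:ℂ) - 1) = ((b - 1 : ℝ) : ℂ) by push_cast; ring,
        ← Complex.ofReal_cpow hx0]
    rw [show (1 - (x:ℂ)) = ((1 - x : ℝ) : ℂ) by push_cast; ring,
        ← Complex.ofReal_cpow hx1]
    push_cast
    ring
  rw [hI, ← Complex.ofReal_add, Complex.Gamma_ofReal, Complex.Gamma_ofReal,
    Complex.Gamma_ofReal] at key
  have hG : (0:ℝ) < Real.Gamma (a + b) := Real.Gamma_pos_of_pos (by linarith)
  have : Real.Gamma a * Real.Gamma b
      = Real.Gamma (a + b) * ∫ x in (0:ℝ)..1, x ^ (a - 1) * (1 - x) ^ (b - 1) := by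
    exact_mod_cast key
  rw [realBeta, this]
  field_simp

lemma realBeta_pos {a b : ℝ} (ha : 0 < a) (hb : 0 < b) : 0 < realBeta a b := by
  unfold realBeta
  have := Real.Gamma_pos_of_pos ha
  have := Real.Gamma_pos_of_pos hb
  have := Real.Gamma_pos_of_pos (show (0:ℝ) < a + b by linarith)
  positivity

lemma realBeta_duplication {m : ℝ} (hm : 0 < m) :
    realBeta m m = (2:ℝ) ^ (1 - 2 * m) * realBeta m (1/2) := by
  have key := Real.Gamma_mul_Gamma_add_half m
  have h1 : Real.Gamma (1/2) = √π := Real.Gamma_one_half_eq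
  have hGm := Real.Gamma_pos_of_pos hm
  have hG2m := Real.Gamma_pos_of_pos (show (0:ℝ) < 2 * m by linarith)
  have hGmh := Real.Gamma_pos_of_pos (show (0:ℝ) < m + 1/2 by linarith)
  have hpi : (0:ℝ) < √π := Real.sqrt_pos.mpr Real.pi_pos
  unfold realBeta
  rw [show m + m = 2 * m by ring, h1]
  rw [show m + 1/2 = (m*2+1)/2 by ring] at key hGmh
  field_simp
  rw [show (2 * m + 1) / 2 = (m * 2 + 1) / 2 by ring]
  linear_combination key

lemma shifted_eq {A B m : ℝ} (hAB : A < B) {u : ℝ} (hu : u ∈ Set.Icc A B) :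
    ((B - u) * (u - A)) ^ (m - 1)
      = ((B - A) ^ (2:ℝ)) ^ (m - 1) *
        (((u - A) * (B - A)⁻¹) ^ (m - 1) * (1 - (u - A) * (B - A)⁻¹) ^ (m - 1)) := by
  have hBA : (0:ℝ) < B - A := by linarith [hAB]
  have h1 : 0 ≤ (u - A) * (B - A)⁻¹ := by
    exact mul_nonneg (by linarith [hu.1]) (by positivity)
  have h2 : 0 ≤ 1 - (u - A) * (B - A)⁻¹ := by
    rw [sub_nonneg, mul_inv_le_iff₀ hBA, one_mul]
    linarith [hu.2]
  rw [← Real.mul_rpow h1 h2, ← Real.mul_rpow (by positivity) (by positivity)]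
  congr 1
  rw [Real.rpow_two]
  field_simp
  ring

lemma shifted_integrable {A B m : ℝ} (hm : 0 < m) (hAB : A < B) :
    IntervalIntegrable (fun u : ℝ => ((B - u) * (u - A)) ^ (m - 1)) volume A B := by
  have hBA : (0:ℝ) < B - A := by linarith
  have h0 := betaReal_integrable hm hm
  have h1 := h0.comp_mul_right (c := (B - A)⁻¹)
  rw [show (0:ℝ) / (B-A)⁻¹ = 0 by simp, show (1:ℝ) / (B-A)⁻¹ = B - A by
    field_simp] at h1
  have h2 := h1.comp_sub_right A
  rw [show (0:ℝ) + A = A by ring, show (B - A) + A = B by ring] at h2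
  have h3 := h2.const_mul (((B - A) ^ (2:ℝ)) ^ (m - 1))
  rw [intervalIntegrable_iff] at h3 ⊢
  refine h3.congr_fun ?_ measurableSet_uIoc
  intro u hu
  rw [uIoc_of_le hAB.le] at hu
  have : u ∈ Set.Icc A B := ⟨hu.1.le, hu.2⟩
  dsimp only
  rw [shifted_eq hAB this]

lemma shifted_integral {A B m : ℝ} (hm : 0 < m) (hAB : A < B) :
    ∫ u in A..B, ((B - u) * (u - A)) ^ (m - 1)
      = (B - A) ^ (2 * m - 1) * realBeta m m := by
  have hBA : (0:ℝ) < B - A := by linarith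
  have key := intervalIntegral.integral_comp_mul_add
    (f := fun u : ℝ => ((B - u) * (u - A)) ^ (m - 1)) (a := 0) (b := 1)
    (c := B - A) hBA.ne' A
  rw [show (B - A) * 0 + A = A by ring, show (B - A) * 1 + A = B by ring] at key
  have lhs_eq : ∫ x in (0:ℝ)..1, ((B - ((B-A)*x + A)) * (((B-A)*x + A) - A)) ^ (m - 1)
      = ((B - A) ^ (2:ℝ)) ^ (m - 1) * realBeta m m := by
    rw [← betaReal_integral hm hm, ← intervalIntegral.integral_const_mul]
    refine intervalIntegral.integral_congr ?_
    intro x hx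
    rw [Set.uIcc_of_le (by norm_num : (0:ℝ) ≤ 1)] at hx
    dsimp only
    have hu : (B-A)*x + A ∈ Set.Icc A B := by
      constructor
      · nlinarith [hx.1]
      · nlinarith [hx.2]
    rw [shifted_eq hAB hu]
    have hx' : ((B-A)*x + A - A) * (B - A)⁻¹ = x := by field_simp; ring
    rw [hx']
  rw [lhs_eq] at key
  rw [smul_eq_mul] at key
  have hint : ∫ u in A..B, ((B - u) * (u - A)) ^ (m - 1)
      = (B - A) * (((B - A) ^ (2:ℝ)) ^ (m - 1) * realBeta m m) := by
    rw [key, ← mul_assoc, mul_inv_cancel₀ hBA.ne', one_mul]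
  rw [hint, ← mul_assoc]
  congr 1
  rw [← Real.rpow_mul hBA.le, show 2*m - 1 = 1 + 2*(m-1) by ring,
    Real.rpow_add hBA, Real.rpow_one]

lemma exp_image_Ioo (a b : ℝ) :
    Real.exp '' Set.Ioo a b = Set.Ioo (Real.exp a) (Real.exp b) := by
  ext y
  constructor
  · rintro ⟨x, hx, rfl⟩
    exact ⟨Real.exp_lt_exp.mpr hx.1, Real.exp_lt_exp.mpr hx.2⟩
  · rintro ⟨h1, h2⟩
    have hy : 0 < y := lt_trans (Real.exp_pos a) h1
    exact ⟨Real.log y, ⟨(Real.lt_log_iff_exp_lt hy).mpr h1,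
      (Real.log_lt_iff_lt_exp hy).mpr h2⟩, Real.exp_log hy⟩

section Key

variable {m r : ℝ}

/-- The function on the u-side. -/
noncomputable def Fu (r m : ℝ) (u : ℝ) : ℝ :=
  ((Real.exp r - u) * (u - Real.exp (-r))) ^ (m - 1)

/-- The function on the s-side. -/
noncomputable def Ws (r m : ℝ) (s : ℝ) : ℝ :=
  (Real.cosh r - Real.cosh s) ^ (m - 1) * Real.exp (m * s)

lemma Ws_eq (hr : 0 < r) {s : ℝ} (hs : s ∈ Set.Ioo (-r) r) :
    Ws r m s = |Real.exp s| • ((2:ℝ) ^ (1 - m) * Fu r m (Real.exp s)) := by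
  set u := Real.exp s with hu
  have hu0 : 0 < u := Real.exp_pos s
  have hA : Real.exp (-r) < u := Real.exp_lt_exp.mpr hs.1
  have hB : u < Real.exp r := Real.exp_lt_exp.mpr hs.2
  have hbase : Real.cosh r - Real.cosh s
      = (Real.exp r - u) * (u - Real.exp (-r)) / (2 * u) := by
    rw [Real.cosh_eq, Real.cosh_eq]
    have : Real.exp (-s) = u⁻¹ := by rw [Real.exp_neg]
    rw [this]
    have h1 : Real.exp r * Real.exp (-r) = 1 := by
      rw [← Real.exp_add]; simp
    field_simp
    nlinarith [h1]
  have hnum : 0 ≤ (Real.exp r - u) * (u - Real.exp (-r)) :=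
    mul_nonneg (by linarith) (by linarith)
  rw [Ws, hbase, Real.div_rpow hnum (by positivity),
    Real.mul_rpow (by norm_num) hu0.le]
  have hum : u ^ (m - 1) = Real.exp (s * (m - 1)) := by
    rw [hu, ← Real.exp_mul]
  rw [hum, _root_.abs_of_pos hu0, smul_eq_mul, Fu]
  rw [show (2:ℝ) ^ (1 - m) = ((2:ℝ) ^ (m - 1))⁻¹ by
    rw [← Real.rpow_neg (by norm_num)]; ring_nf]
  have h2 : (0:ℝ) < (2:ℝ) ^ (m - 1) := Real.rpow_pos_of_pos (by norm_num) _
  have he : (0:ℝ) < Real.exp (s * (m - 1)) := Real.exp_pos _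
  rw [div_mul_eq_mul_div, div_eq_iff (by positivity),
    show m * s = s + s * (m - 1) by ring, Real.exp_add, ← hu]
  ring_nf
  rw [mul_assoc (_ * _), mul_inv_cancel₀ (ne_of_gt (Real.rpow_pos_of_pos two_pos (-1+m))), mul_one]

end Key

lemma Ws_integral_integrable (hm : 0 < m) (hr : 0 < r) :
    IntegrableOn (Ws r m) (Set.Ioo (-r) r) ∧
    ∫ s in Set.Ioo (-r) r, Ws r m s
      = (2:ℝ) ^ (1 - m) * ((2 * Real.sinh r) ^ (2 * m - 1) * realBeta m m) := by
  have hAB : Real.exp (-r) < Real.exp r := Real.exp_lt_exp.mpr (by linarith)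
  have hms : MeasurableSet (Set.Ioo (-r) r) := measurableSet_Ioo
  have hderiv : ∀ x ∈ Set.Ioo (-r) r,
      HasDerivWithinAt Real.exp (Real.exp x) (Set.Ioo (-r) r) x :=
    fun x _ => (Real.hasDerivAt_exp x).hasDerivWithinAt
  have hinj : Set.InjOn Real.exp (Set.Ioo (-r) r) := Real.exp_injective.injOn
  have himg := exp_image_Ioo (-r) r
  -- integrability of Fu on the image
  have hFu : IntegrableOn (fun u => (2:ℝ) ^ (1 - m) * Fu r m u)
      (Set.Ioo (Real.exp (-r)) (Real.exp r)) := by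
    have := (shifted_integrable (A := Real.exp (-r)) (B := Real.exp r) hm hAB)
    rw [intervalIntegrable_iff, uIoc_of_le hAB.le] at this
    rw [← integrableOn_Ioc_iff_integrableOn_Ioo] at *
    exact (this.const_mul _)
  -- transfer integrability
  have hint : IntegrableOn (Ws r m) (Set.Ioo (-r) r) := by
    have h1 := (integrableOn_image_iff_integrableOn_abs_deriv_smul hms hderiv hinj
      (fun u => (2:ℝ) ^ (1 - m) * Fu r m u)).mp (by rwa [himg])
    exact h1.congr_fun (fun s hs => (Ws_eq hr hs).symm) hms
  refine ⟨hint, ?_⟩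
  have h2 := integral_image_eq_integral_abs_deriv_smul hms hderiv hinj
      (fun u => (2:ℝ) ^ (1 - m) * Fu r m u)
  rw [himg] at h2
  have h3 : ∫ s in Set.Ioo (-r) r, Ws r m s
      = ∫ u in Set.Ioo (Real.exp (-r)) (Real.exp r), (2:ℝ) ^ (1 - m) * Fu r m u := by
    rw [h2]
    exact setIntegral_congr_fun hms (fun s hs => Ws_eq hr hs)
  rw [h3, MeasureTheory.integral_const_mul]
  congr 1
  have h4 : ∫ u in Set.Ioo (Real.exp (-r)) (Real.exp r), Fu r m u
      = ∫ u in (Real.exp (-r))..(Real.exp r), Fu r m u := by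
    rw [intervalIntegral.integral_of_le hAB.le, MeasureTheory.integral_Ioc_eq_integral_Ioo]
  rw [h4]
  unfold Fu
  rw [shifted_integral hm hAB]
  congr 2
  rw [Real.sinh_eq]
  ring

lemma coshW_eq (r m : ℝ) : (fun s => (Real.cosh r - Real.cosh s) ^ (m - 1) * Real.cosh (m * s))
    = fun s => (1/2) * (Ws r m s + Ws r m (-s)) := by
  funext s
  simp only [Ws, Real.cosh_neg, Real.cosh_eq, mul_neg, Real.exp_neg]
  have h : Real.exp (m * s) > 0 := Real.exp_pos _
  field_simp
  ring

lemma J_lemma (hm : 0 < m) (hr : 0 < r) :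
    IntervalIntegrable
      (fun s => (Real.cosh r - Real.cosh s) ^ (m - 1) * Real.cosh (m * s)) volume 0 r ∧
    ∫ s in (0:ℝ)..r, (Real.cosh r - Real.cosh s) ^ (m - 1) * Real.cosh (m * s)
      = (1/2) * ((2:ℝ) ^ (1 - m) * ((2 * Real.sinh r) ^ (2 * m - 1) * realBeta m m)) := by
  obtain ⟨hW, hval⟩ := Ws_integral_integrable hm hr
  have hW1 : IntervalIntegrable (Ws r m) volume 0 r := by
    rw [intervalIntegrable_iff, uIoc_of_le hr.le]
    rw [integrableOn_Ioc_iff_integrableOn_Ioo]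
    exact hW.mono_set (Set.Ioo_subset_Ioo (by linarith) le_rfl)
  have hW2 : IntervalIntegrable (Ws r m) volume (-r) 0 := by
    rw [intervalIntegrable_iff, uIoc_of_le (by linarith)]
    rw [integrableOn_Ioc_iff_integrableOn_Ioo]
    exact hW.mono_set (Set.Ioo_subset_Ioo le_rfl hr.le)
  have hW3 : IntervalIntegrable (fun s => Ws r m (-s)) volume 0 r := by
    have := ((IntervalIntegrable.iff_comp_neg (f := Ws r m) (by simp)).mp hW2).symm
    simpa using this
  constructor
  · rw [coshW_eq]
    exact ((hW1.add hW3).const_mul _)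
  · rw [coshW_eq r m, intervalIntegral.integral_const_mul]
    rw [intervalIntegral.integral_add hW1 hW3]
    have hneg : ∫ s in (0:ℝ)..r, Ws r m (-s) = ∫ s in (-r)..(0:ℝ), Ws r m s := by
      rw [intervalIntegral.integral_comp_neg (fun s => Ws r m s), neg_zero]
    rw [hneg, add_comm, intervalIntegral.integral_add_adjacent_intervals hW2 hW1]
    rw [intervalIntegral.integral_of_le (by linarith : (-r) ≤ r),
      MeasureTheory.integral_Ioc_eq_integral_Ioo, hval]


lemma abs_cos_le (z : ℂ) : ‖Complex.cos z‖ ≤ Real.cosh z.im := by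
  rw [Complex.cos]
  calc ‖(Complex.exp (z*Complex.I) + Complex.exp (-z*Complex.I))/2‖
      ≤ (‖Complex.exp (z*Complex.I)‖ + ‖Complex.exp (-z*Complex.I)‖) / 2 := by
        rw [norm_div]
        simp only [Complex.norm_ofNat]
        gcongr
        exact norm_add_le _ _
    _ = Real.cosh z.im := by
        rw [Complex.norm_exp, Complex.norm_exp, Real.cosh_eq]
        simp [mul_comm]
        ring_nf

lemma const_identity {n : ℕ} (hn : 2 ≤ n) {r : ℝ} (hr : 0 < r) :
    (aconst n * Real.sinh r ^ ((2:ℝ) - n)) *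
      ((1/2) * ((2:ℝ) ^ (1 - ((n:ℝ)-1)/2) *
        ((2 * Real.sinh r) ^ (2 * (((n:ℝ)-1)/2) - 1)
          * realBeta (((n:ℝ)-1)/2) (((n:ℝ)-1)/2)))) = 1 := by
  have hn' : (2:ℝ) ≤ (n:ℝ) := by exact_mod_cast hn
  set m := ((n:ℝ)-1)/2 with hm_def
  have hm : 0 < m := by rw [hm_def]; linarith
  have hs : 0 < Real.sinh r := by simpa using Real.sinh_lt_sinh.mpr (show (0:ℝ) < r from hr)
  have hβ : 0 < realBeta m (1/2) := realBeta_pos hm (by norm_num)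
  set β2 := realBeta m (1/2) with hβ_def
  set S := Real.sinh r with hS_def
  have e1 : (2*S) ^ (2*m-1) = (2:ℝ)^(2*m-1) * S^(2*m-1) :=
    Real.mul_rpow (by norm_num) hs.le
  have e2 : S^((2:ℝ)-n) * S^(2*m-1) = 1 := by
    rw [← Real.rpow_add hs, show ((2:ℝ)-n) + (2*m-1) = 0 by rw [hm_def]; ring,
      Real.rpow_zero]
  have e3 : (2:ℝ)^m * (2:ℝ)^(1-m) * ((2:ℝ)^(2*m-1) * (2:ℝ)^(1-2*m)) = 2 := by
    rw [← Real.rpow_add two_pos, ← Real.rpow_add two_pos, ← Real.rpow_add two_pos,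
      show m + (1-m) + (2*m-1 + (1-2*m)) = 1 by ring, Real.rpow_one]
  rw [realBeta_duplication hm, e1, aconst, ← hm_def, ← hβ_def]
  have key : (2:ℝ)^m / β2 * S ^ ((2:ℝ) - ↑n) *
      ((1/2) * ((2:ℝ)^(1-m) * ((2:ℝ)^(2*m-1) * S^(2*m-1) * ((2:ℝ)^(1-2*m) * β2))))
      = ((2:ℝ)^m * 2^(1-m) * ((2:ℝ)^(2*m-1) * 2^(1-2*m)))
        * ((S^((2:ℝ)-n) * S^(2*m-1)) * ((β2 / β2) * (1/2))) := by
    ring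
  rw [key, e2, e3, div_self hβ.ne']
  norm_num

theorem sphFnC_bounded (n : ℕ) (hn : 2 ≤ n) (lam : ℂ) (r : ℝ) :
    (|lam.im| ≤ ((n:ℝ) - 1) / 2 → 0 ≤ r → ‖sphFnC n lam r‖ ≤ 1) ∧
    (|lam.im| < ((n:ℝ) - 1) / 2 → 0 < r → ‖sphFnC n lam r‖ < 1) := by
  have hn' : (2:ℝ) ≤ (n:ℝ) := by exact_mod_cast hn
  set m := ((n:ℝ)-1)/2 with hm_def
  have hm : 0 < m := by rw [hm_def]; linarith
  have main : ∀ hb : |lam.im| ≤ m, ∀ hr : 0 < r,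
      ‖sphFnC n lam r‖ ≤ 1 ∧
      (|lam.im| < m → ‖sphFnC n lam r‖ < 1) := by
    intro hb hr
    have hs : 0 < Real.sinh r := by
      simpa using Real.sinh_lt_sinh.mpr (show (0:ℝ) < r from hr)
    have hβ : 0 < realBeta m (1/2) := realBeta_pos hm (by norm_num)
    have hC : 0 < aconst n * Real.sinh r ^ ((2:ℝ) - n) := by
      apply mul_pos
      · rw [aconst, ← hm_def]
        exact div_pos (Real.rpow_pos_of_pos (by norm_num) _) hβ
      · exact Real.rpow_pos_of_pos hs _
    set C := aconst n * Real.sinh r ^ ((2:ℝ) - n) with hC_def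
    set w : ℝ → ℝ := fun s => (Real.cosh r - Real.cosh s) ^ (m - 1) with hw_def
    set g : ℝ → ℝ := fun s => (Real.cosh r - Real.cosh s) ^ (m - 1) * Real.cosh (m * s)
      with hg_def
    set f : ℝ → ℂ := fun s => ((Real.cosh r - Real.cosh s) ^ (m - 1) : ℝ)
      * Complex.cos (lam * s) with hf_def
    obtain ⟨hJint, hJval⟩ := J_lemma hm hr
    have hsph : sphFnC n lam r = (C : ℝ) * ∫ s in (0:ℝ)..r, f s := by
      rw [sphFnC, if_neg hr.ne', hC_def]
      congr 1
      refine intervalIntegral.integral_congr fun s _ => ?_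
      rw [hf_def]
      rw [show ((n:ℝ)-3)/2 = m - 1 by rw [hm_def]; ring]
    have hcosh_mono : ∀ s ∈ Set.Icc (0:ℝ) r, Real.cosh s ≤ Real.cosh r := fun s hs' =>
      Real.cosh_le_cosh.mpr (by rw [_root_.abs_of_nonneg hs'.1, _root_.abs_of_pos hr]; exact hs'.2)
    have hwnn : ∀ s ∈ Set.Icc (0:ℝ) r, 0 ≤ w s := fun s hs' =>
      Real.rpow_nonneg (by linarith [hcosh_mono s hs']) _
    have him : ∀ s : ℝ, (lam * (s:ℂ)).im = lam.im * s := by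
      intro s; rw [Complex.mul_im]; simp
    have hnorm_f : ∀ s ∈ Set.Icc (0:ℝ) r, ‖f s‖ ≤ g s := by
      intro s hs'
      rw [hf_def, hg_def]
      dsimp only
      rw [norm_mul, Complex.norm_real, Real.norm_eq_abs,
        _root_.abs_of_nonneg (hwnn s hs')]
      refine mul_le_mul_of_nonneg_left ?_ (hwnn s hs')
      calc ‖Complex.cos (lam * s)‖ ≤ Real.cosh ((lam * (s:ℂ)).im) := abs_cos_le _
        _ ≤ Real.cosh (m * s) := by
            rw [him s]
            refine Real.cosh_le_cosh.mpr ?_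
            rw [abs_mul, abs_mul, _root_.abs_of_pos hm]
            exact mul_le_mul_of_nonneg_right hb (abs_nonneg s)
    have hmeasf : Measurable f := by
      apply Measurable.mul
      · exact Complex.measurable_ofReal.comp (by measurability)
      · exact (Complex.continuous_cos.comp
          (continuous_const.mul Complex.continuous_ofReal)).measurable
    have hfint : IntervalIntegrable f volume 0 r := by
      refine hJint.mono_fun hmeasf.aestronglyMeasurable ?_
      refine MeasureTheory.ae_restrict_of_forall_mem measurableSet_uIoc fun s hs' => ?_
      have hs'' : s ∈ Set.Icc (0:ℝ) r := by
        rw [uIoc_of_le hr.le] at hs'; exact ⟨hs'.1.le, hs'.2⟩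
      calc ‖f s‖ ≤ g s := hnorm_f s hs''
        _ ≤ ‖g s‖ := le_abs_self _
    have habs : ‖sphFnC n lam r‖
        = C * ‖∫ s in (0:ℝ)..r, f s‖ := by
      rw [hsph, norm_mul, Complex.norm_real, Real.norm_eq_abs, _root_.abs_of_pos hC]
    have h1 : ‖∫ s in (0:ℝ)..r, f s‖ ≤ ∫ s in (0:ℝ)..r, ‖f s‖ := by
      exact intervalIntegral.norm_integral_le_integral_norm hr.le
    have h2 : (∫ s in (0:ℝ)..r, ‖f s‖) ≤ ∫ s in (0:ℝ)..r, g s :=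
      intervalIntegral.integral_mono_on hr.le hfint.norm hJint hnorm_f
    have h3 : C * ∫ s in (0:ℝ)..r, g s = 1 := by
      rw [hJval, hC_def]
      exact const_identity hn hr
    constructor
    · rw [habs]
      calc C * ‖∫ s in (0:ℝ)..r, f s‖ ≤ C * ∫ s in (0:ℝ)..r, g s :=
            mul_le_mul_of_nonneg_left (le_trans h1 h2) hC.le
        _ = 1 := h3
    · intro hb'
      have hlt : (∫ s in (0:ℝ)..r, ‖f s‖) < ∫ s in (0:ℝ)..r, g s := by
        have hpos : 0 < ∫ s in (0:ℝ)..r, (g s - ‖f s‖) := by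
          refine intervalIntegral.intervalIntegral_pos_of_pos_on
            (hJint.sub hfint.norm) (fun x hx => ?_) hr
          have hx0 : 0 < x := hx.1
          have hwpos : 0 < w x := by
            refine Real.rpow_pos_of_pos ?_ _
            have : Real.cosh x < Real.cosh r := Real.cosh_lt_cosh.mpr
              (by rw [_root_.abs_of_pos hx0, _root_.abs_of_pos hr]; exact hx.2)
            linarith
          have hcos : ‖Complex.cos (lam * x)‖ < Real.cosh (m * x) := by
            have h5 := abs_cos_le (lam * (x:ℂ))
            rw [him x] at h5
            refine lt_of_le_of_lt h5 ?_
            refine Real.cosh_lt_cosh.mpr ?_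
            rw [abs_mul, abs_mul, _root_.abs_of_pos hm]
            exact mul_lt_mul_of_pos_right hb' (by rwa [_root_.abs_of_pos hx0])
          have hfx : ‖f x‖ = w x * ‖Complex.cos (lam * x)‖ := by
            rw [hf_def]
            dsimp only
            rw [norm_mul, Complex.norm_real, Real.norm_eq_abs,
              _root_.abs_of_nonneg (hwnn x ⟨hx0.le, hx.2.le⟩)]
          have hgx : g x = w x * Real.cosh (m * x) := rfl
          rw [hfx, hgx]
          nlinarith [hwpos, hcos]
        rw [intervalIntegral.integral_sub hJint hfint.norm] at hpos
        linarith
      rw [habs]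
      calc C * ‖∫ s in (0:ℝ)..r, f s‖ ≤ C * ∫ s in (0:ℝ)..r, ‖f s‖ :=
            mul_le_mul_of_nonneg_left h1 hC.le
        _ < C * ∫ s in (0:ℝ)..r, g s := mul_lt_mul_of_pos_left hlt hC
        _ = 1 := h3
  constructor
  · intro hb hr0
    rcases eq_or_lt_of_le hr0 with h | h
    · rw [sphFnC, if_pos h.symm]
      simp
    · exact (main hb h).1
  · intro hb' hr
    exact (main hb'.le hr).2 hb'
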